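/- Let μ, μ_g, t ∈ ℝ³, let Q ∈ O(3) be orthogonal with μ_g = Q.mulVec μ + t, and let L, L_g : Matrix (Fin 3) (Fin 3) ℝ be invertible matrices satisfying L_g * L_gᵀ = Q * L * Lᵀ * Qᵀ. Define the affine transformations F(v) = L⁻¹.mulVec (v − μ) and F_g(v) = L_g⁻¹.mulVec (v − μ_g). Then there exists an orthogonal matrix O ∈ O(3), namely O = L_g⁻¹ * Q * L, such that for every point v ∈ ℝ³, F_g(Q.mulVec v + t) = O.mulVec (F v). -/

import Mathlib

open Matrix

/-- The receptor-specific affine transformation intertwines rigid motions with an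
orthogonal transformation of the standard space: there is an orthogonal `O`,
namely `O = L_g⁻¹ * Q * L`, with `F_g (Q v + t) = O (F v)` for all `v`. -/
theorem affine_standardization_equivariant
    (μ μg t : Fin 3 → ℝ) (Q L Lg : Matrix (Fin 3) (Fin 3) ℝ)
    (hQ : Q ∈ Matrix.orthogonalGroup (Fin 3) ℝ)
    (hμ : μg = Q.mulVec μ + t)
    (hL : IsUnit L.det) (hLg : IsUnit Lg.det)
    (hcov : Lg * Lgᵀ = Q * L * Lᵀ * Qᵀ) :
    ∃ O ∈ Matrix.orthogonalGroup (Fin 3) ℝ, O = Lg⁻¹ * Q * L ∧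
      ∀ v : Fin 3 → ℝ,
        Lg⁻¹.mulVec (Q.mulVec v + t - μg) = O.mulVec (L⁻¹.mulVec (v - μ)) := by
  refine ⟨Lg⁻¹ * Q * L, ?_, rfl, ?_⟩
  · -- orthogonality
    rw [Matrix.mem_orthogonalGroup_iff]
    have hLginv : Lg * Lg⁻¹ = 1 := Matrix.mul_nonsing_inv Lg hLg
    have hLginv' : Lg⁻¹ * Lg = 1 := Matrix.nonsing_inv_mul Lg hLg
    have hT : (Lg⁻¹ * Q * L) * (Lg⁻¹ * Q * L)ᵀ = 1 := by
      have : (Lg⁻¹ * Q * L) * (Lg⁻¹ * Q * L)ᵀ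
          = Lg⁻¹ * (Q * L * Lᵀ * Qᵀ) * Lg⁻¹ᵀ := by
        simp [Matrix.transpose_mul, Matrix.mul_assoc]
      rw [this, ← hcov]
      rw [Matrix.transpose_nonsing_inv]
      calc Lg⁻¹ * (Lg * Lgᵀ) * Lgᵀ⁻¹
          = (Lg⁻¹ * Lg) * (Lgᵀ * Lgᵀ⁻¹) := by
            simp [Matrix.mul_assoc]
        _ = 1 := by
            rw [hLginv', Matrix.mul_nonsing_inv _ (by simpa using hLg)]
            simp
    have hstar : star (Lg⁻¹ * Q * L) = (Lg⁻¹ * Q * L)ᵀ := by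
      ext i j; simp [Matrix.star_apply]
    exact hT
  · intro v
    have key : Q.mulVec v + t - μg = Q.mulVec (v - μ) := by
      rw [hμ, Matrix.mulVec_sub]
      abel
    rw [key]
    have hLL : L * L⁻¹ = 1 := Matrix.mul_nonsing_inv L hL
    have : (Lg⁻¹ * Q * L).mulVec (L⁻¹.mulVec (v - μ))
        = (Lg⁻¹ * Q * (L * L⁻¹)).mulVec (v - μ) := by
      simp [Matrix.mulVec_mulVec, Matrix.mul_assoc]
    rw [this, hLL, Matrix.mul_one, ← Matrix.mulVec_mulVec]
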